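/- Let A : ℝ → ℝ^{N×N} be continuous, T-periodic, with A(t) an ML-matrix for all t, and let P be the Poincaré map (time-T solution operator) of x' = A(t)x in the standard basis. Then P is nonsingular with all entries nonnegative, and ln d(P) ≥ (1/N)·∫₀ᵀ (tr A(t) + 2 ∑_{j<k} √(a_{jk}(t)·a_{kj}(t))) dt. -/

import Mathlib

open Set


lemma key_pos {N : ℕ} {T : ℝ} (hT : 0 < T) (A : ℝ → Matrix (Fin N) (Fin N) ℝ)
    (hAcont : Continuous A) (hML : ∀ t, ∀ i j, i ≠ j → 0 ≤ A t i j)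
    (x : ℝ → Fin N → ℝ)
    (hx : ∀ t i, HasDerivAt (fun s => x s i) ((A t).mulVec (x t) i) t)
    (hx0 : ∀ i, 0 < x 0 i) :
    ∀ t ∈ Set.Icc (0:ℝ) T, ∀ i, 0 < x t i := by
  intro τ hτ iι
  haveI : Nonempty (Fin N) := ⟨iι⟩
  have hent : ∀ i j : Fin N, Continuous (fun t => A t i j) := fun i j =>
    (continuous_apply j).comp ((continuous_apply i).comp hAcont)
  obtain ⟨c, hc0, hc⟩ : ∃ c : ℝ, 0 ≤ c ∧ ∀ t ∈ Set.Icc (0:ℝ) T, ∀ i, |A t i i| ≤ c := by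
    have h1 : ∀ i : Fin N, ∃ C : ℝ, ∀ t ∈ Set.Icc (0:ℝ) T, |A t i i| ≤ C := by
      intro i
      obtain ⟨C, hC⟩ := isCompact_Icc.exists_bound_of_continuousOn
        ((hent i i).continuousOn (s := Set.Icc (0:ℝ) T))
      exact ⟨C, fun t ht => by simpa [Real.norm_eq_abs] using hC t ht⟩
    choose C hC using h1
    refine ⟨Finset.univ.sup' Finset.univ_nonempty (fun i => max 0 (C i)), ?_, ?_⟩
    · exact le_trans (le_max_left 0 (C iι))
        (Finset.le_sup' (fun i => max 0 (C i)) (Finset.mem_univ iι))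
    · intro t ht i
      exact le_trans (le_trans (hC i t ht) (le_max_right 0 (C i)))
        (Finset.le_sup' (fun i => max 0 (C i)) (Finset.mem_univ i))
  set y : ℝ → Fin N → ℝ := fun t i => Real.exp (c * t) * x t i with hy
  have hxc : ∀ i, Continuous (fun s => x s i) := fun i =>
    continuous_iff_continuousAt.mpr fun t => (hx t i).continuousAt
  have hy' : ∀ t i, HasDerivAt (fun s => y s i)
      (Real.exp (c * t) * c * x t i + Real.exp (c * t) * ((A t).mulVec (x t) i)) t := by
    intro t i
    have h := (((hasDerivAt_id t).const_mul c).exp).mul (hx t i)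
    simp only [id, mul_one] at h
    exact h
  have hycont : ∀ i, Continuous (fun s => y s i) := fun i =>
    (Real.continuous_exp.comp (continuous_const.mul continuous_id)).mul (hxc i)
  have hy0 : ∀ i, 0 < y 0 i := by
    intro i; simp only [hy, mul_zero, Real.exp_zero, one_mul]; exact hx0 i
  -- main positivity claim for y
  have main : ∀ s ∈ Set.Icc (0:ℝ) T, ∀ i, 0 < y s i := by
    by_contra hcon
    push_neg at hcon
    obtain ⟨s₀, hs₀, i₀', hi₀'⟩ := hcon
    set S : Set ℝ := {s | s ∈ Set.Icc (0:ℝ) T ∧ ∃ i, y s i ≤ 0} with hS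
    have hSclosed : IsClosed S := by
      have : S = Set.Icc (0:ℝ) T ∩ (⋃ i : Fin N, {s | y s i ≤ 0}) := by
        ext s; simp [hS, Set.mem_iUnion]
      rw [this]
      exact isClosed_Icc.inter (isClosed_iUnion_of_finite fun i =>
        isClosed_le (hycont i) continuous_const)
    have hSne : S.Nonempty := ⟨s₀, hs₀, i₀', hi₀'⟩
    have hSbdd : BddBelow S := ⟨0, fun s hs => hs.1.1⟩
    set t₀ := sInf S with ht₀
    have ht₀S : t₀ ∈ S := hSclosed.csInf_mem hSne hSbdd
    obtain ⟨ht₀Icc, i₀, hi₀⟩ := ht₀S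
    have ht₀pos : 0 < t₀ := by
      rcases lt_or_eq_of_le ht₀Icc.1 with h | h
      · exact h
      · exfalso; rw [← h] at hi₀; exact absurd hi₀ (not_le.mpr (hy0 i₀))
    have hbefore : ∀ s, 0 ≤ s → s < t₀ → ∀ i, 0 < y s i := by
      intro s hs0 hst i
      by_contra hcon2
      push_neg at hcon2
      have : s ∈ S := ⟨⟨hs0, le_trans hst.le ht₀Icc.2⟩, i, hcon2⟩
      exact absurd (csInf_le hSbdd this) (not_le.mpr hst)
    have hAt : ∀ i, 0 ≤ y t₀ i := by
      intro i
      have htend : Filter.Tendsto (fun s => y s i) (nhdsWithin t₀ (Set.Iio t₀))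
          (nhds (y t₀ i)) := ((hycont i).tendsto t₀).mono_left nhdsWithin_le_nhds
      refine ge_of_tendsto htend ?_
      filter_upwards [Ioo_mem_nhdsLT_of_mem (by constructor <;> [exact ht₀pos; exact le_rfl] :
        t₀ ∈ Set.Ioc (0:ℝ) t₀)] with s hs
      exact (hbefore s hs.1.le hs.2 i).le
    -- monotonicity of y i₀ on [0, t₀]
    have hmono : MonotoneOn (fun s => y s i₀) (Set.Icc 0 t₀) := by
      apply monotoneOn_of_deriv_nonneg (convex_Icc 0 t₀) ((hycont i₀).continuousOn)
      · intro s _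
        exact ((hy' s i₀).differentiableAt).differentiableWithinAt
      · intro s hs
        rw [interior_Icc] at hs
        rw [(hy' s i₀).deriv]
        have hsIcc : s ∈ Set.Icc (0:ℝ) T := ⟨hs.1.le, le_trans hs.2.le ht₀Icc.2⟩
        have hypos : ∀ j, 0 < y s j := hbefore s hs.1.le hs.2
        have hmv : (A s).mulVec (x s) i₀ = A s i₀ i₀ * x s i₀ +
            ∑ j ∈ Finset.univ.erase i₀, A s i₀ j * x s j := by
          rw [Matrix.mulVec, dotProduct]
          exact (Finset.add_sum_erase _ _ (Finset.mem_univ i₀)).symm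
        rw [hmv, mul_add]
        have h1 : 0 ≤ Real.exp (c * s) * c * x s i₀ +
            Real.exp (c * s) * (A s i₀ i₀ * x s i₀) := by
          have hxpos : 0 < x s i₀ := by
            have := hypos i₀
            simp only [hy] at this
            nlinarith [Real.exp_pos (c * s)]
          have habs := hc s hsIcc i₀
          have : -c ≤ A s i₀ i₀ := neg_le_of_abs_le habs
          nlinarith [Real.exp_pos (c * s), mul_nonneg (mul_nonneg (Real.exp_pos (c*s)).le
            (by linarith : (0:ℝ) ≤ c + A s i₀ i₀)) hxpos.le]
        have h2 : 0 ≤ Real.exp (c * s) * ∑ j ∈ Finset.univ.erase i₀, A s i₀ j * x s j := by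
          apply mul_nonneg (Real.exp_pos _).le
          apply Finset.sum_nonneg
          intro j hj
          have hne : j ≠ i₀ := Finset.ne_of_mem_erase hj
          have hxj : 0 < x s j := by
            have := hypos j
            simp only [hy] at this
            nlinarith [Real.exp_pos (c * s)]
          exact mul_nonneg (hML s i₀ j (Ne.symm hne)) hxj.le
        linarith
    have : 0 < y t₀ i₀ := lt_of_lt_of_le (hy0 i₀)
      (hmono (Set.left_mem_Icc.mpr ht₀pos.le) (Set.right_mem_Icc.mpr ht₀pos.le) ht₀pos.le)
    exact absurd hi₀ (not_le.mpr this)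
  have := main τ hτ iι
  simp only [hy] at this
  nlinarith [Real.exp_pos (c * τ)]


-- derivative of a column combination of the flow
lemma phi_deriv {N : ℕ} (A : ℝ → Matrix (Fin N) (Fin N) ℝ)
    (Φ : ℝ → Matrix (Fin N) (Fin N) ℝ)
    (hΦ : ∀ t, ∀ i j, HasDerivAt (fun s => Φ s i j) ((A t * Φ t) i j) t)
    (v : Fin N → ℝ) (t : ℝ) (i : Fin N) :
    HasDerivAt (fun s => (Φ s).mulVec v i) ((A t).mulVec ((Φ t).mulVec v) i) t := by
  have heq : (fun s => (Φ s).mulVec v i) = fun s => ∑ j, Φ s i j * v j := by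
    funext s; simp [Matrix.mulVec, dotProduct]
  rw [heq]
  have h := HasDerivAt.fun_sum (fun j (_ : j ∈ Finset.univ) => (hΦ t i j).mul_const (v j))
  refine h.congr_deriv ?_
  rw [Matrix.mulVec_mulVec]
  simp [Matrix.mulVec, dotProduct]

-- entrywise bound on a compact interval
lemma entries_bound {N : ℕ} [Nonempty (Fin N)] (T : ℝ)
    (A : ℝ → Matrix (Fin N) (Fin N) ℝ) (hAcont : Continuous A) :
    ∃ c : ℝ, 0 ≤ c ∧ ∀ t ∈ Set.Icc (0:ℝ) T, ∀ i j, |A t i j| ≤ c := by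
  have hent : ∀ i j : Fin N, Continuous (fun t => A t i j) := fun i j =>
    (continuous_apply j).comp ((continuous_apply i).comp hAcont)
  have h1 : ∀ p : Fin N × Fin N, ∃ C : ℝ, ∀ t ∈ Set.Icc (0:ℝ) T, |A t p.1 p.2| ≤ C := by
    intro p
    obtain ⟨C, hC⟩ := isCompact_Icc.exists_bound_of_continuousOn
      ((hent p.1 p.2).continuousOn (s := Set.Icc (0:ℝ) T))
    exact ⟨C, fun t ht => by simpa [Real.norm_eq_abs] using hC t ht⟩
  choose C hC using h1
  refine ⟨Finset.univ.sup' Finset.univ_nonempty (fun p => max 0 (C p)), ?_, ?_⟩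
  · obtain ⟨i⟩ := (inferInstance : Nonempty (Fin N))
    exact le_trans (le_max_left 0 (C (i, i)))
      (Finset.le_sup' (fun p => max 0 (C p)) (Finset.mem_univ (i, i)))
  · intro t ht i j
    exact le_trans (le_trans (hC (i, j) t ht) (le_max_right 0 (C (i, j))))
      (Finset.le_sup' (fun p => max 0 (C p)) (Finset.mem_univ (i, j)))

lemma unit_lemma {N : ℕ} (T : ℝ) (hT : 0 < T)
    (A : ℝ → Matrix (Fin N) (Fin N) ℝ) (hAcont : Continuous A)
    (Φ : ℝ → Matrix (Fin N) (Fin N) ℝ) (hΦ0 : Φ 0 = 1)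
    (hΦ : ∀ t, ∀ i j, HasDerivAt (fun s => Φ s i j) ((A t * Φ t) i j) t) :
    IsUnit (Φ T) := by
  rcases Nat.eq_zero_or_pos N with hN | hN
  · subst hN
    rw [Matrix.isUnit_iff_isUnit_det, Matrix.det_isEmpty]
    exact isUnit_one
  haveI : Nonempty (Fin N) := ⟨⟨0, hN⟩⟩
  rw [Matrix.isUnit_iff_isUnit_det, isUnit_iff_ne_zero]
  intro hdet
  obtain ⟨w, hw0, hw⟩ := Matrix.exists_mulVec_eq_zero_iff.mpr hdet
  obtain ⟨c, hc0, hc⟩ := entries_bound T A hAcont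
  -- clamped coefficient matrix for the time-reversed equation
  set proj : ℝ → ℝ := fun s => max 0 (min s T) with hproj
  have hprojmem : ∀ s, proj s ∈ Set.Icc (0:ℝ) T := by
    intro s
    constructor
    · exact le_max_left 0 _
    · exact max_le hT.le (min_le_right s T)
  have hprojeq : ∀ s ∈ Set.Icc (0:ℝ) T, proj s = s := by
    intro s hs
    simp [hproj, min_eq_left hs.2, max_eq_right hs.1]
  set B : ℝ → Matrix (Fin N) (Fin N) ℝ := fun s => A (T - proj s) with hB
  have hBmem : ∀ s, T - proj s ∈ Set.Icc (0:ℝ) T := by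
    intro s
    have := hprojmem s
    exact ⟨by linarith [this.2], by linarith [this.1]⟩
  set K : NNReal := Real.toNNReal (N * c) with hK
  have hKc : (N : ℝ) * c ≤ K := Real.le_coe_toNNReal _
  set V : ℝ → (Fin N → ℝ) → (Fin N → ℝ) := fun s u => -(B s).mulVec u with hV
  have hlip : ∀ s, LipschitzWith K (V s) := by
    intro s
    apply LipschitzWith.of_dist_le_mul
    intro u u'
    rw [dist_pi_le_iff (by positivity)]
    intro i
    have hsplit : ∑ j, B s i j * (u' j - u j)
        = ∑ j, B s i j * u' j - ∑ j, B s i j * u j := by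
      rw [← Finset.sum_sub_distrib]
      congr 1; funext j; ring
    have hdd : dist (V s u i) (V s u' i) = |∑ j, B s i j * (u' j - u j)| := by
      rw [Real.dist_eq]
      congr 1
      simp only [hV, Pi.neg_apply, Matrix.mulVec, dotProduct]
      rw [hsplit]
      ring
    calc dist (V s u i) (V s u' i) = |∑ j, B s i j * (u' j - u j)| := hdd
      _ ≤ ∑ j, |B s i j * (u' j - u j)| := Finset.abs_sum_le_sum_abs _ _
      _ ≤ ∑ j : Fin N, c * dist u u' := by
          apply Finset.sum_le_sum
          intro j _
          rw [abs_mul]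
          have h1 : |B s i j| ≤ c := hc _ (hBmem s) i j
          have h2 : |u' j - u j| ≤ dist u u' := by
            rw [← Real.dist_eq, dist_comm]; exact dist_le_pi_dist u u' j
          have := dist_nonneg (x := u) (y := u')
          exact mul_le_mul h1 h2 (abs_nonneg _) hc0
      _ = (N : ℝ) * c * dist u u' := by
          rw [Finset.sum_const, Finset.card_univ, Fintype.card_fin, nsmul_eq_mul]; ring
      _ ≤ K * dist u u' := by
          apply mul_le_mul_of_nonneg_right hKc dist_nonneg
  -- the two solutions
  set g : ℝ → Fin N → ℝ := fun s => (Φ (T - s)).mulVec w with hg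
  have hgderiv : ∀ s ∈ Set.Ico (0:ℝ) T, HasDerivWithinAt g (V s (g s)) (Set.Ici s) s := by
    intro s hs
    apply HasDerivAt.hasDerivWithinAt
    apply hasDerivAt_pi.mpr
    intro i
    have hcomp : HasDerivAt (fun u : ℝ => T - u) (-1) s := by
      have h := (hasDerivAt_const s T).sub (hasDerivAt_id s)
      simp only [id, zero_sub] at h
      exact h
    have h1 := (phi_deriv A Φ hΦ w (T - s) i)
    have h2 := HasDerivAt.scomp (𝕜 := ℝ) (𝕜' := ℝ) s h1 hcomp
    have : V s (g s) i = (-1 : ℝ) • ((A (T - s)).mulVec ((Φ (T - s)).mulVec w) i) := by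
      simp only [hV, hg, Pi.neg_apply, hB, hprojeq s ⟨hs.1, hs.2.le⟩]
      simp
    rw [this]
    exact h2
  have hgcont : ContinuousOn g (Set.Icc 0 T) := by
    apply Continuous.continuousOn
    apply continuous_pi
    intro i
    have : Continuous (fun s => (Φ s).mulVec w i) := by
      apply continuous_iff_continuousAt.mpr
      intro t
      exact (phi_deriv A Φ hΦ w t i).continuousAt
    exact this.comp (continuous_const.sub continuous_id)
  have hzderiv : ∀ s ∈ Set.Ico (0:ℝ) T,
      HasDerivWithinAt (fun _ : ℝ => (0 : Fin N → ℝ)) (V s 0) (Set.Ici s) s := by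
    intro s hs
    have : V s 0 = 0 := by simp [hV]
    rw [this]
    exact (hasDerivAt_const s (0 : Fin N → ℝ)).hasDerivWithinAt
  have heq0 : g 0 = (fun _ : ℝ => (0 : Fin N → ℝ)) 0 := by
    simp only [hg, sub_zero]
    exact hw
  have := ODE_solution_unique hlip hgcont hgderiv (continuous_const.continuousOn) hzderiv heq0
  have hgT : g T = 0 := this (Set.right_mem_Icc.mpr hT.le)
  simp only [hg, sub_self, hΦ0, Matrix.one_mulVec] at hgT
  exact hw0 hgT

lemma nonneg_lemma {N : ℕ} (T : ℝ) (hT : 0 < T)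
    (A : ℝ → Matrix (Fin N) (Fin N) ℝ) (hAcont : Continuous A)
    (hML : ∀ t, ∀ i j, i ≠ j → 0 ≤ A t i j)
    (Φ : ℝ → Matrix (Fin N) (Fin N) ℝ) (hΦ0 : Φ 0 = 1)
    (hΦ : ∀ t, ∀ i j, HasDerivAt (fun s => Φ s i j) ((A t * Φ t) i j) t) :
    ∀ i j, 0 ≤ Φ T i j := by
  intro i j
  have hpos : ∀ δ : ℝ, 0 < δ → 0 < Φ T i j + δ * ∑ k, Φ T i k := by
    intro δ hδ
    set w : Fin N → ℝ := fun k => (if k = j then (1:ℝ) else 0) + δ with hw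
    have hkey := key_pos hT A hAcont hML (fun t => (Φ t).mulVec w)
      (fun t i' => phi_deriv A Φ hΦ w t i')
      (fun k => by
        simp only [hΦ0, Matrix.one_mulVec, hw]
        split_ifs <;> linarith)
      T (Set.right_mem_Icc.mpr hT.le) i
    have hexp : (Φ T).mulVec w i = Φ T i j + δ * ∑ k, Φ T i k := by
      calc (Φ T).mulVec w i
          = ∑ k, (Φ T i k * (if k = j then (1:ℝ) else 0) + Φ T i k * δ) := by
            simp [Matrix.mulVec, dotProduct, hw, mul_add]
        _ = (∑ k, Φ T i k * (if k = j then (1:ℝ) else 0)) + ∑ k, Φ T i k * δ :=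
            Finset.sum_add_distrib
        _ = Φ T i j + δ * ∑ k, Φ T i k := by
            congr 1
            · simp [mul_ite, mul_one, mul_zero]
            · rw [← Finset.sum_mul]; ring
    rw [hexp] at hkey
    exact hkey
  have htend : Filter.Tendsto (fun δ : ℝ => Φ T i j + δ * ∑ k, Φ T i k)
      (nhdsWithin 0 (Set.Ioi 0)) (nhds (Φ T i j)) := by
    have hcont : Continuous (fun δ : ℝ => Φ T i j + δ * ∑ k, Φ T i k) :=
      continuous_const.add (continuous_id.mul continuous_const)
    have h2 := (hcont.tendsto 0).mono_left
      (nhdsWithin_le_nhds (s := Set.Ioi (0:ℝ)))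
    simpa using h2
  exact ge_of_tendsto htend (by
    filter_upwards [self_mem_nhdsWithin] with δ hδ
    exact (hpos δ hδ).le)

lemma sum_split {N : ℕ} (F : Fin N × Fin N → ℝ) :
    ∑ p : Fin N × Fin N, F p
      = (∑ i, F (i, i)) +
        ∑ p ∈ Finset.univ.filter (fun p : Fin N × Fin N => p.1 < p.2),
          (F p + F p.swap) := by
  classical
  have h1 := Finset.sum_filter_add_sum_filter_not Finset.univ
    (fun p : Fin N × Fin N => p.1 = p.2) F
  have h2 := Finset.sum_filter_add_sum_filter_not
    (Finset.univ.filter (fun p : Fin N × Fin N => ¬ p.1 = p.2))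
    (fun p => p.1 < p.2) F
  have e1 : ((Finset.univ.filter (fun p : Fin N × Fin N => ¬ p.1 = p.2)).filter
      (fun p => p.1 < p.2)) = Finset.univ.filter (fun p : Fin N × Fin N => p.1 < p.2) := by
    ext p; simp only [Finset.mem_filter, Finset.mem_univ, true_and]
    exact ⟨fun h => h.2, fun h => ⟨ne_of_lt h, h⟩⟩
  have e2 : ((Finset.univ.filter (fun p : Fin N × Fin N => ¬ p.1 = p.2)).filter
      (fun p => ¬ p.1 < p.2)) = Finset.univ.filter (fun p : Fin N × Fin N => p.2 < p.1) := by
    ext p; simp only [Finset.mem_filter, Finset.mem_univ, true_and]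
    constructor
    · rintro ⟨hne, hnlt⟩
      exact lt_of_le_of_ne (not_lt.mp hnlt) (fun h => hne h.symm)
    · intro h
      exact ⟨fun he => absurd h (by rw [he]; exact lt_irrefl _), not_lt.mpr h.le⟩
  have hdiag : ∑ p ∈ Finset.univ.filter (fun p : Fin N × Fin N => p.1 = p.2), F p
      = ∑ i, F (i, i) := by
    have himg : Finset.univ.filter (fun p : Fin N × Fin N => p.1 = p.2)
        = Finset.univ.image (fun i => (i, i)) := by
      ext p
      simp only [Finset.mem_filter, Finset.mem_univ, true_and, Finset.mem_image]
      constructor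
      · intro h
        exact ⟨p.1, by cases p; simp_all⟩
      · rintro ⟨i, rfl⟩
        rfl
    rw [himg, Finset.sum_image]
    intro a _ b _ h
    simpa using congrArg Prod.fst h
  have e3 : ∑ p ∈ Finset.univ.filter (fun p : Fin N × Fin N => p.2 < p.1), F p
      = ∑ p ∈ Finset.univ.filter (fun p : Fin N × Fin N => p.1 < p.2), F p.swap := by
    refine Finset.sum_equiv (Equiv.prodComm (Fin N) (Fin N)) (fun p => by simp) ?_
    intro p _
    rfl
  rw [e1, e2, e3] at h2
  rw [← h1, ← h2, hdiag, Finset.sum_add_distrib]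

lemma log_bound {N : ℕ} (hN : 0 < N) (T : ℝ) (hT : 0 < T)
    (A : ℝ → Matrix (Fin N) (Fin N) ℝ) (hAcont : Continuous A)
    (hML : ∀ t, ∀ i j, i ≠ j → 0 ≤ A t i j)
    (Φ : ℝ → Matrix (Fin N) (Fin N) ℝ) (hΦ0 : Φ 0 = 1)
    (hΦ : ∀ t, ∀ i j, HasDerivAt (fun s => Φ s i j) ((A t * Φ t) i j) t)
    (v : Fin N → ℝ) (hv : ∀ i, 0 < v i) (lam : ℝ)
    (hlam : ∀ i, (Φ T).mulVec v i ≤ lam * v i) :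
    (∫ t in (0:ℝ)..T, (Matrix.trace (A t) +
        2 * ∑ p ∈ Finset.univ.filter (fun p : Fin N × Fin N => p.1 < p.2),
          Real.sqrt (A t p.1 p.2 * A t p.2 p.1)))
      ≤ N * Real.log lam := by
  haveI : Nonempty (Fin N) := ⟨⟨0, hN⟩⟩
  have hent : ∀ i j : Fin N, Continuous (fun t => A t i j) := fun i j =>
    (continuous_apply j).comp ((continuous_apply i).comp hAcont)
  set x : ℝ → Fin N → ℝ := fun t => (Φ t).mulVec v with hx
  have hxd : ∀ t i, HasDerivAt (fun s => x s i) ((A t).mulVec (x t) i) t :=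
    fun t i => phi_deriv A Φ hΦ v t i
  have hx0 : ∀ i, x 0 i = v i := by
    intro i; simp [hx, hΦ0, Matrix.one_mulVec]
  have hxpos : ∀ t ∈ Set.Icc (0:ℝ) T, ∀ i, 0 < x t i :=
    key_pos hT A hAcont hML x hxd (fun i => by rw [hx0]; exact hv i)
  have hxc : ∀ i, Continuous (fun t => x t i) := fun i =>
    continuous_iff_continuousAt.mpr fun t => (hxd t i).continuousAt
  set L : ℝ → ℝ := fun t => ∑ i, Real.log (x t i) with hL
  set D : ℝ → ℝ := fun t => ∑ i, (A t).mulVec (x t) i / x t i with hD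
  have hLd : ∀ t ∈ Set.uIcc (0:ℝ) T, HasDerivAt L (D t) t := by
    rw [Set.uIcc_of_le hT.le]
    intro t ht
    exact HasDerivAt.fun_sum fun i _ => (hxd t i).log (ne_of_gt (hxpos t ht i))
  have hnum : ∀ i, Continuous (fun t => (A t).mulVec (x t) i) := by
    intro i
    have : (fun t => (A t).mulVec (x t) i) = fun t => ∑ j, A t i j * x t j := by
      funext t; simp [Matrix.mulVec, dotProduct]
    rw [this]
    exact continuous_finset_sum _ fun j _ => (hent i j).mul (hxc j)
  have hDcont : ContinuousOn D (Set.uIcc (0:ℝ) T) := by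
    rw [Set.uIcc_of_le hT.le]
    apply continuousOn_finset_sum
    intro i _
    exact ((hnum i).continuousOn).div ((hxc i).continuousOn)
      (fun t ht => ne_of_gt (hxpos t ht i))
  have hDint : IntervalIntegrable D MeasureTheory.volume 0 T :=
    hDcont.intervalIntegrable
  have hftc : ∫ t in (0:ℝ)..T, D t = L T - L 0 :=
    intervalIntegral.integral_eq_sub_of_hasDerivAt hLd hDint
  have hGcont : Continuous (fun t => Matrix.trace (A t) +
      2 * ∑ p ∈ Finset.univ.filter (fun p : Fin N × Fin N => p.1 < p.2),
        Real.sqrt (A t p.1 p.2 * A t p.2 p.1)) := by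
    apply Continuous.add
    · have : (fun t => Matrix.trace (A t)) = fun t => ∑ i, A t i i := by
        funext t; simp [Matrix.trace, Matrix.diag]
      rw [this]
      exact continuous_finset_sum _ fun i _ => hent i i
    · exact continuous_const.mul (continuous_finset_sum _ fun p _ =>
        Real.continuous_sqrt.comp ((hent p.1 p.2).mul (hent p.2 p.1)))
  have hGint : IntervalIntegrable (fun t => Matrix.trace (A t) +
      2 * ∑ p ∈ Finset.univ.filter (fun p : Fin N × Fin N => p.1 < p.2),
        Real.sqrt (A t p.1 p.2 * A t p.2 p.1)) MeasureTheory.volume 0 T :=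
    hGcont.intervalIntegrable 0 T
  -- pointwise inequality
  have hpt : ∀ t ∈ Set.Icc (0:ℝ) T, (Matrix.trace (A t) +
      2 * ∑ p ∈ Finset.univ.filter (fun p : Fin N × Fin N => p.1 < p.2),
        Real.sqrt (A t p.1 p.2 * A t p.2 p.1)) ≤ D t := by
    intro t ht
    set F : Fin N × Fin N → ℝ := fun p => A t p.1 p.2 * x t p.2 / x t p.1 with hF
    have hDt : D t = ∑ p : Fin N × Fin N, F p := by
      rw [hD]
      rw [← Finset.univ_product_univ, Finset.sum_product]
      apply Finset.sum_congr rfl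
      intro i _
      rw [Matrix.mulVec, dotProduct, Finset.sum_div]
    have hdiagF : ∑ i, F (i, i) = Matrix.trace (A t) := by
      have h1 : ∀ i : Fin N, F (i, i) = A t i i := by
        intro i
        have hne := ne_of_gt (hxpos t ht i)
        rw [hF]
        simp only []
        rw [mul_div_assoc, div_self hne, mul_one]
      rw [Finset.sum_congr rfl (fun i _ => h1 i)]
      simp [Matrix.trace, Matrix.diag]
    have hoff : ∀ p ∈ Finset.univ.filter (fun p : Fin N × Fin N => p.1 < p.2),
        2 * Real.sqrt (A t p.1 p.2 * A t p.2 p.1) ≤ F p + F p.swap := by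
      intro p hp
      simp only [Finset.mem_filter, Finset.mem_univ, true_and] at hp
      have hne : p.1 ≠ p.2 := ne_of_lt hp
      have ha : 0 ≤ A t p.1 p.2 := hML t p.1 p.2 hne
      have hb : 0 ≤ A t p.2 p.1 := hML t p.2 p.1 (Ne.symm hne)
      have hx1 : 0 < x t p.1 := hxpos t ht p.1
      have hx2 : 0 < x t p.2 := hxpos t ht p.2
      have hX : 0 ≤ A t p.1 p.2 * x t p.2 / x t p.1 := by positivity
      have hY : 0 ≤ A t p.2 p.1 * x t p.1 / x t p.2 := by positivity
      have hsq : Real.sqrt (A t p.1 p.2 * A t p.2 p.1)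
          = Real.sqrt (A t p.1 p.2 * x t p.2 / x t p.1) *
            Real.sqrt (A t p.2 p.1 * x t p.1 / x t p.2) := by
        rw [← Real.sqrt_mul hX]
        congr 1
        field_simp
      have hFp : F p = A t p.1 p.2 * x t p.2 / x t p.1 := rfl
      have hFq : F p.swap = A t p.2 p.1 * x t p.1 / x t p.2 := rfl
      rw [hFp, hFq, hsq]
      nlinarith [sq_nonneg (Real.sqrt (A t p.1 p.2 * x t p.2 / x t p.1)
          - Real.sqrt (A t p.2 p.1 * x t p.1 / x t p.2)),
        Real.sq_sqrt hX, Real.sq_sqrt hY,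
        Real.sqrt_nonneg (A t p.1 p.2 * x t p.2 / x t p.1),
        Real.sqrt_nonneg (A t p.2 p.1 * x t p.1 / x t p.2)]
    calc Matrix.trace (A t) +
        2 * ∑ p ∈ Finset.univ.filter (fun p : Fin N × Fin N => p.1 < p.2),
          Real.sqrt (A t p.1 p.2 * A t p.2 p.1)
        = Matrix.trace (A t) +
          ∑ p ∈ Finset.univ.filter (fun p : Fin N × Fin N => p.1 < p.2),
            2 * Real.sqrt (A t p.1 p.2 * A t p.2 p.1) := by
          rw [Finset.mul_sum]
      _ ≤ Matrix.trace (A t) +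
          ∑ p ∈ Finset.univ.filter (fun p : Fin N × Fin N => p.1 < p.2),
            (F p + F p.swap) := by
          have := Finset.sum_le_sum hoff
          linarith
      _ = ∑ p : Fin N × Fin N, F p := by rw [sum_split F, hdiagF]
      _ = D t := hDt.symm
  -- lam is positive
  have hxT : ∀ i, 0 < x T i := hxpos T (Set.right_mem_Icc.mpr hT.le)
  have hlam_pos : 0 < lam := by
    have h1 := hlam ⟨0, hN⟩
    have h2 := hxT ⟨0, hN⟩
    have h3 := hv (⟨0, hN⟩ : Fin N)
    rw [hx] at h2
    nlinarith
  -- endgame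
  have hLT : L T ≤ N * Real.log lam + L 0 := by
    have h1 : ∀ i, Real.log (x T i) ≤ Real.log lam + Real.log (v i) := by
      intro i
      have hxi := hxT i
      have h2 : x T i ≤ lam * v i := hlam i
      calc Real.log (x T i) ≤ Real.log (lam * v i) := Real.log_le_log hxi h2
        _ = Real.log lam + Real.log (v i) :=
          Real.log_mul (ne_of_gt hlam_pos) (ne_of_gt (hv i))
    calc L T ≤ ∑ i, (Real.log lam + Real.log (v i)) := Finset.sum_le_sum fun i _ => h1 i
      _ = N * Real.log lam + ∑ i, Real.log (v i) := by
          rw [Finset.sum_add_distrib, Finset.sum_const, Finset.card_univ,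
            Fintype.card_fin, nsmul_eq_mul]
      _ = N * Real.log lam + L 0 := by
          congr 1
          rw [hL]
          exact (Finset.sum_congr rfl fun i _ => by rw [hx0 i]).symm
  calc (∫ t in (0:ℝ)..T, (Matrix.trace (A t) +
        2 * ∑ p ∈ Finset.univ.filter (fun p : Fin N × Fin N => p.1 < p.2),
          Real.sqrt (A t p.1 p.2 * A t p.2 p.1)))
      ≤ ∫ t in (0:ℝ)..T, D t :=
        intervalIntegral.integral_mono_on hT.le hGint hDint hpt
    _ = L T - L 0 := hftc
    _ ≤ N * Real.log lam := by linarith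




lemma perron {N : ℕ} (hN : 0 < N) (M : Matrix (Fin N) (Fin N) ℝ)
    (hM : ∀ i j, 0 < M i j) :
    ∃ (lam : ℝ) (v : Fin N → ℝ), (∀ i, 0 < v i) ∧ (∑ i, v i = 1) ∧
      M.mulVec v = lam • v := by
  haveI : Nonempty (Fin N) := ⟨⟨0, hN⟩⟩
  set m : ℝ := Finset.univ.inf' Finset.univ_nonempty (fun p : Fin N × Fin N => M p.1 p.2) with hm
  set μ : ℝ := Finset.univ.sup' Finset.univ_nonempty (fun p : Fin N × Fin N => M p.1 p.2) with hμ
  have hm_pos : 0 < m := by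
    rw [hm, Finset.lt_inf'_iff]
    exact fun p _ => hM p.1 p.2
  have hmle : ∀ i j, m ≤ M i j := fun i j =>
    Finset.inf'_le (fun p : Fin N × Fin N => M p.1 p.2) (Finset.mem_univ (i, j))
  have hleμ : ∀ i j, M i j ≤ μ := fun i j =>
    Finset.le_sup' (fun p : Fin N × Fin N => M p.1 p.2) (Finset.mem_univ (i, j))
  have hμ_pos : 0 < μ :=
    lt_of_lt_of_le hm_pos ((hmle ⟨0, hN⟩ ⟨0, hN⟩).trans (hleμ ⟨0, hN⟩ ⟨0, hN⟩))
  have hmμ : m ≤ μ := (hmle ⟨0, hN⟩ ⟨0, hN⟩).trans (hleμ ⟨0, hN⟩ ⟨0, hN⟩)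
  set δ : ℝ := m / (N * μ) with hδ
  have hδ_pos : 0 < δ := div_pos hm_pos (by positivity)
  have hδN : δ ≤ 1 / N := by
    rw [hδ, div_le_div_iff₀ (by positivity) (by positivity)]
    calc m * N = N * m := by ring
    _ ≤ N * μ := by nlinarith
    _ = 1 * (N * μ) := by ring
  set K : Set (Fin N → ℝ) := {v | (∀ i, δ ≤ v i) ∧ ∑ i, v i = 1} with hKdef
  have hvle1 : ∀ v ∈ K, ∀ i, v i ≤ 1 := by
    intro v hv i
    have h1 : ∑ k, v k = 1 := hv.2
    have : v i ≤ ∑ k, v k := by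
      apply Finset.single_le_sum (f := v) (fun k _ => le_trans hδ_pos.le (hv.1 k))
        (Finset.mem_univ i)
    linarith
  have hKcompact : IsCompact K := by
    apply IsCompact.of_isClosed_subset (isCompact_univ_pi fun _ : Fin N => isCompact_Icc
      (a := δ) (b := 1))
    · have hKeq : K = (⋂ i, {v : Fin N → ℝ | δ ≤ v i}) ∩ {v | ∑ i, v i = 1} := by
        ext v; simp [hKdef, Set.mem_iInter]
      rw [hKeq]
      exact IsClosed.inter
        (isClosed_iInter fun i => isClosed_le continuous_const (continuous_apply i))
        (isClosed_eq (continuous_finset_sum _ fun i _ => continuous_apply i) continuous_const)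
    · intro v hv
      rw [Set.mem_univ_pi]
      exact fun i => ⟨hv.1 i, hvle1 v hv i⟩
  have hKne : K.Nonempty := by
    refine ⟨fun _ => 1 / N, fun i => hδN, ?_⟩
    rw [Finset.sum_const, Finset.card_univ, Fintype.card_fin, nsmul_eq_mul]
    field_simp
  set f : (Fin N → ℝ) → ℝ :=
    fun v => Finset.univ.inf' Finset.univ_nonempty (fun i => M.mulVec v i / v i) with hf
  have hfcont : ContinuousOn f K := by
    apply ContinuousOn.finset_inf'_apply
    intro i _
    apply ContinuousOn.div
    · have hmv : (fun v : Fin N → ℝ => M.mulVec v i) = fun v => ∑ j, M i j * v j := by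
        funext v; simp [Matrix.mulVec, dotProduct]
      rw [hmv]
      exact (continuous_finset_sum _ fun j _ =>
        (continuous_const.mul (continuous_apply j))).continuousOn
    · exact (continuous_apply i).continuousOn
    · intro v hv
      exact ne_of_gt (lt_of_lt_of_le hδ_pos (hv.1 i))
  obtain ⟨v, hvK, hvmax⟩ := hKcompact.exists_isMaxOn hKne hfcont
  set r : ℝ := f v with hr
  have hvpos : ∀ i, 0 < v i := fun i => lt_of_lt_of_le hδ_pos (hvK.1 i)
  have hrle : ∀ i, r * v i ≤ M.mulVec v i := by
    intro i
    have h1 : r ≤ M.mulVec v i / v i := Finset.inf'_le _ (Finset.mem_univ i)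
    rw [le_div_iff₀ (hvpos i)] at h1
    linarith [h1]
  by_cases heig : M.mulVec v = r • v
  · exact ⟨r, v, hvpos, hvK.2, heig⟩
  exfalso
  -- u = Mv - r v ≥ 0 and nonzero
  set u : Fin N → ℝ := M.mulVec v - r • v with hu
  have hu_nonneg : ∀ i, 0 ≤ u i := fun i => by
    simp only [hu, Pi.sub_apply, Pi.smul_apply, smul_eq_mul]; linarith [hrle i]
  have hu_ne : ∃ i, 0 < u i := by
    by_contra hcon
    push_neg at hcon
    apply heig
    funext i
    have := hu_nonneg i
    have h2 := hcon i
    have : u i = 0 := le_antisymm h2 this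
    simp only [hu, Pi.sub_apply, Pi.smul_apply, smul_eq_mul] at this
    simp only [Pi.smul_apply, smul_eq_mul]
    linarith
  obtain ⟨i₁, hi₁⟩ := hu_ne
  -- M u > 0 everywhere
  have hMu_pos : ∀ i, 0 < M.mulVec u i := by
    intro i
    have h1 : M.mulVec u i = ∑ j, M i j * u j := by
      simp [Matrix.mulVec, dotProduct]
    rw [h1]
    have : ∀ j ∈ Finset.univ, 0 ≤ M i j * u j :=
      fun j _ => mul_nonneg (hM i j).le (hu_nonneg j)
    have h2 : 0 < M i i₁ * u i₁ := mul_pos (hM i i₁) hi₁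
    exact Finset.sum_pos' this ⟨i₁, Finset.mem_univ i₁, h2⟩
  -- y = Mv
  set y : Fin N → ℝ := M.mulVec v with hy
  have hy_lb : ∀ i, m ≤ y i := by
    intro i
    have h1 : y i = ∑ j, M i j * v j := by simp [hy, Matrix.mulVec, dotProduct]
    rw [h1]
    calc m = ∑ j, m * v j := by
            rw [← Finset.mul_sum, hvK.2, mul_one]
      _ ≤ ∑ j, M i j * v j := Finset.sum_le_sum fun j _ =>
            mul_le_mul_of_nonneg_right (hmle i j) (hvpos j).le
  have hy_ub : ∀ i, y i ≤ μ := by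
    intro i
    have h1 : y i = ∑ j, M i j * v j := by simp [hy, Matrix.mulVec, dotProduct]
    rw [h1]
    calc ∑ j, M i j * v j ≤ ∑ j, μ * v j := Finset.sum_le_sum fun j _ =>
            mul_le_mul_of_nonneg_right (hleμ i j) (hvpos j).le
      _ = μ := by rw [← Finset.mul_sum, hvK.2, mul_one]
  have hypos : ∀ i, 0 < y i := fun i => lt_of_lt_of_le hm_pos (hy_lb i)
  set s : ℝ := ∑ i, y i with hs
  have hs_pos : 0 < s := Finset.sum_pos (fun i _ => hypos i) Finset.univ_nonempty
  have hs_ub : s ≤ N * μ := by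
    rw [hs]
    calc ∑ i, y i ≤ ∑ _i : Fin N, μ := Finset.sum_le_sum fun i _ => hy_ub i
      _ = N * μ := by rw [Finset.sum_const, Finset.card_univ, Fintype.card_fin, nsmul_eq_mul]
  set w : Fin N → ℝ := s⁻¹ • y with hw
  have hwK : w ∈ K := by
    constructor
    · intro i
      have : δ ≤ y i / s := by
        rw [hδ, div_le_div_iff₀ (by positivity) hs_pos]
        calc m * s ≤ m * (N * μ) := by nlinarith
          _ ≤ y i * (N * μ) := by nlinarith [hy_lb i]
      simpa [hw, div_eq_inv_mul, mul_comm] using this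
    · simp only [hw, Pi.smul_apply, smul_eq_mul, ← Finset.mul_sum, ← hs]
      field_simp
  have hfw : r < f w := by
    rw [hf, Finset.lt_inf'_iff]
    intro i _
    have hMw : M.mulVec w i = s⁻¹ * M.mulVec y i := by
      rw [hw, Matrix.mulVec_smul]
      simp
    have hwi : w i = s⁻¹ * y i := by simp [hw]
    rw [hMw, hwi]
    have h4 : r * y i < M.mulVec y i := by
      have h3 := hMu_pos i
      have he : M.mulVec u = M.mulVec y - r • y := by
        rw [hu, Matrix.mulVec_sub, Matrix.mulVec_smul, ← hy]
      rw [he] at h3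
      simp only [Pi.sub_apply, Pi.smul_apply, smul_eq_mul] at h3
      linarith
    have hsiinv : (0:ℝ) < s⁻¹ := inv_pos.mpr hs_pos
    rw [mul_div_mul_left _ _ (ne_of_gt hsiinv)]
    rw [lt_div_iff₀ (hypos i)]
    linarith
  exact absurd (hvmax hwK) (not_le.mpr hfw)


/-- Kolotilina-type estimate for the Poincaré map of a time-periodic cooperative system:
`P` is nonsingular, entrywise nonnegative, and
`ln d(P) ≥ (1/N) ∫₀ᵀ (tr A(t) + 2 ∑_{j<k} √(a_{jk}(t) a_{kj}(t))) dt`. -/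
theorem stmt17 {N : ℕ} (T : ℝ) (hT : 0 < T)
    (A : ℝ → Matrix (Fin N) (Fin N) ℝ)
    (hAcont : Continuous A)
    (hper : ∀ t, A (t + T) = A t)
    (hML : ∀ t, ∀ i j, i ≠ j → 0 ≤ A t i j)
    (Φ : ℝ → Matrix (Fin N) (Fin N) ℝ)
    (hΦ0 : Φ 0 = 1)
    (hΦ : ∀ t, ∀ i j, HasDerivAt (fun s => Φ s i j) ((A t * Φ t) i j) t)
    (P : Matrix (Fin N) (Fin N) ℝ) (hP : P = Φ T)
    (d : ℝ)
    (hd : (d : ℂ) ∈ spectrum ℂ (P.map (fun r => (r : ℂ))))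
    (hdom : ∀ μ ∈ spectrum ℂ (P.map (fun r => (r : ℂ))), μ.re ≤ d) :
    IsUnit P ∧ (∀ i j, 0 ≤ P i j) ∧
      Real.log d ≥ (1 / (N : ℝ)) * ∫ t in (0 : ℝ)..T,
        (Matrix.trace (A t) +
          2 * ∑ p ∈ Finset.univ.filter (fun p : Fin N × Fin N => p.1 < p.2),
            Real.sqrt (A t p.1 p.2 * A t p.2 p.1)) := by
  subst hP
  rcases Nat.eq_zero_or_pos N with hN0 | hN
  · exfalso
    subst hN0
    rw [spectrum.mem_iff] at hd
    apply hd
    rw [Matrix.isUnit_iff_isUnit_det, Matrix.det_isEmpty]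
    exact isUnit_one
  haveI : Nonempty (Fin N) := ⟨⟨0, hN⟩⟩
  have hNR : (0:ℝ) < (N:ℝ) := by exact_mod_cast hN
  have hPnn : ∀ i j, 0 ≤ Φ T i j := nonneg_lemma T hT A hAcont hML Φ hΦ0 hΦ
  refine ⟨unit_lemma T hT A hAcont Φ hΦ0 hΦ, hPnn, ?_⟩
  set I : ℝ := ∫ t in (0:ℝ)..T, (Matrix.trace (A t) +
      2 * ∑ p ∈ Finset.univ.filter (fun p : Fin N × Fin N => p.1 < p.2),
        Real.sqrt (A t p.1 p.2 * A t p.2 p.1)) with hI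
  -- entry bound for Φ T
  set CB : ℝ := Finset.univ.sup' Finset.univ_nonempty
    (fun p : Fin N × Fin N => Φ T p.1 p.2) with hCB
  have hCB_le : ∀ i j, Φ T i j ≤ CB := fun i j =>
    Finset.le_sup' (fun p : Fin N × Fin N => Φ T p.1 p.2) (Finset.mem_univ (i, j))
  have hCB0 : 0 ≤ CB := le_trans (hPnn ⟨0, hN⟩ ⟨0, hN⟩) (hCB_le _ _)
  -- step: perturbed Perron data
  have hstep : ∀ n : ℕ, ∃ (lam : ℝ) (v : Fin N → ℝ), (∀ i, 0 < v i) ∧ (∑ i, v i = 1) ∧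
      (∀ i, (Φ T).mulVec v i + (1/(n+1) : ℝ) = lam * v i) ∧ I ≤ N * Real.log lam := by
    intro n
    set ε : ℝ := (1/(n+1) : ℝ) with hε
    have hε_pos : 0 < ε := by positivity
    set M : Matrix (Fin N) (Fin N) ℝ := Matrix.of (fun i j => Φ T i j + ε) with hM
    have hMpos : ∀ i j, 0 < M i j := fun i j => by
      have := hPnn i j
      simp only [hM, Matrix.of_apply]
      linarith
    obtain ⟨lam, v, hvpos, hvsum, heig⟩ := perron hN M hMpos
    have heig' : ∀ i, (Φ T).mulVec v i + ε = lam * v i := by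
      intro i
      have h1 := congrFun heig i
      have h2 : M.mulVec v i = (Φ T).mulVec v i + ε := by
        simp only [hM, Matrix.mulVec, dotProduct, Matrix.of_apply, add_mul,
          Finset.sum_add_distrib]
        congr 1
        rw [← Finset.mul_sum, hvsum, mul_one]
      rw [h2] at h1
      simpa using h1
    have hle : ∀ i, (Φ T).mulVec v i ≤ lam * v i := fun i => by
      have := heig' i; linarith
    exact ⟨lam, v, hvpos, hvsum, heig',
      log_bound hN T hT A hAcont hML Φ hΦ0 hΦ v hvpos lam hle⟩
  choose lam vv hvpos hvsum heig hIle using hstep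
  -- bounds on lam n
  have hlam_lb : ∀ n, Real.exp (I / N) ≤ lam n := by
    intro n
    have h1 := hIle n
    have h2 : I / N ≤ Real.log (lam n) := by
      rw [div_le_iff₀ hNR]
      linarith [h1]
    have hlampos : 0 < lam n := by
      have h3 := heig n ⟨0, hN⟩
      have h4 : 0 ≤ (Φ T).mulVec (vv n) ⟨0, hN⟩ := by
        simp only [Matrix.mulVec, dotProduct]
        exact Finset.sum_nonneg fun k _ => mul_nonneg (hPnn _ _) (hvpos n k).le
      have h5 := hvpos n ⟨0, hN⟩
      have hεp : (0:ℝ) < 1/(n+1) := by positivity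
      nlinarith
    calc Real.exp (I / N) ≤ Real.exp (Real.log (lam n)) := Real.exp_le_exp.mpr h2
      _ = lam n := Real.exp_log hlampos
  have hlam_pos : ∀ n, 0 < lam n := fun n =>
    lt_of_lt_of_le (Real.exp_pos _) (hlam_lb n)
  have hvle1 : ∀ n i, vv n i ≤ 1 := by
    intro n i
    have h1 := hvsum n
    have : vv n i ≤ ∑ k, vv n k :=
      Finset.single_le_sum (f := vv n) (fun k _ => (hvpos n k).le) (Finset.mem_univ i)
    linarith
  have hlam_ub : ∀ n, lam n ≤ N * (CB + 1) := by
    intro n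
    obtain ⟨i, _, hi⟩ := Finset.exists_le_of_sum_le (f := fun _ : Fin N => (1:ℝ)/N)
      (g := vv n) Finset.univ_nonempty
      (by
        rw [Finset.sum_const, Finset.card_univ, Fintype.card_fin, nsmul_eq_mul, hvsum n]
        rw [mul_one_div, div_self (ne_of_gt hNR)])
    have h1 := heig n i
    have h2 : (Φ T).mulVec (vv n) i ≤ CB := by
      calc (Φ T).mulVec (vv n) i = ∑ k, Φ T i k * vv n k := by
            simp [Matrix.mulVec, dotProduct]
        _ ≤ ∑ k, CB * vv n k := Finset.sum_le_sum fun k _ =>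
            mul_le_mul_of_nonneg_right (hCB_le i k) (hvpos n k).le
        _ = CB := by rw [← Finset.mul_sum, hvsum n, mul_one]
    have hεle : (1:ℝ)/(n+1) ≤ 1 := by
      rw [div_le_one (by positivity)]
      linarith [Nat.cast_nonneg (α := ℝ) n]
    have h3 : lam n * vv n i ≤ CB + 1 := by linarith
    have h4 : lam n * (1/N) ≤ lam n * vv n i :=
      mul_le_mul_of_nonneg_left hi (hlam_pos n).le
    have h5 : lam n * (1/N) ≤ CB + 1 := le_trans h4 h3
    calc lam n = (lam n * (1/N)) * N := by field_simp
      _ ≤ (CB + 1) * N := mul_le_mul_of_nonneg_right h5 hNR.le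
      _ = N * (CB + 1) := by ring
  -- compactness
  set Kc : Set (ℝ × (Fin N → ℝ)) :=
    (Set.Icc (Real.exp (I / N)) (N * (CB + 1))) ×ˢ
      (Set.univ.pi fun _ : Fin N => Set.Icc (0:ℝ) 1) with hKc
  have hKcomp : IsCompact Kc :=
    (isCompact_Icc).prod (isCompact_univ_pi fun _ => isCompact_Icc)
  have hmem : ∀ n, (lam n, vv n) ∈ Kc := by
    intro n
    constructor
    · exact ⟨hlam_lb n, hlam_ub n⟩
    · rw [Set.mem_univ_pi]
      exact fun i => ⟨(hvpos n i).le, hvle1 n i⟩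
  obtain ⟨⟨lamL, vL⟩, hmemL, φ, hφ, htend⟩ := hKcomp.tendsto_subseq hmem
  have htlam : Filter.Tendsto (fun n => lam (φ n)) Filter.atTop (nhds lamL) :=
    (continuous_fst.tendsto _).comp htend
  have htv : ∀ i, Filter.Tendsto (fun n => vv (φ n) i) Filter.atTop (nhds (vL i)) :=
    fun i => (((continuous_apply i).comp continuous_snd).tendsto _).comp htend
  have hφtop : Filter.Tendsto φ Filter.atTop Filter.atTop := hφ.tendsto_atTop
  have hεtend : Filter.Tendsto (fun n => (1:ℝ)/(φ n + 1)) Filter.atTop (nhds 0) :=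
    (tendsto_one_div_add_atTop_nhds_zero_nat).comp hφtop
  -- limit equation
  have heigL : ∀ i, (Φ T).mulVec vL i = lamL * vL i := by
    intro i
    have hL : Filter.Tendsto (fun n => (Φ T).mulVec (vv (φ n)) i + (1:ℝ)/(φ n + 1))
        Filter.atTop (nhds ((Φ T).mulVec vL i + 0)) := by
      apply Filter.Tendsto.add _ hεtend
      have : (fun n => (Φ T).mulVec (vv (φ n)) i) =
          fun n => ∑ k, Φ T i k * vv (φ n) k := by
        funext n; simp [Matrix.mulVec, dotProduct]
      rw [this]
      have h2 : (Φ T).mulVec vL i = ∑ k, Φ T i k * vL k := by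
        simp [Matrix.mulVec, dotProduct]
      rw [h2]
      exact tendsto_finset_sum _ fun k _ => (tendsto_const_nhds).mul (htv k)
    have hR : Filter.Tendsto (fun n => lam (φ n) * vv (φ n) i)
        Filter.atTop (nhds (lamL * vL i)) := htlam.mul (htv i)
    have heq : (fun n => (Φ T).mulVec (vv (φ n)) i + (1:ℝ)/(φ n + 1)) =
        fun n => lam (φ n) * vv (φ n) i := by
      funext n
      have := heig (φ n) i
      push_cast at this ⊢
      linarith
    rw [heq] at hL
    have := tendsto_nhds_unique hL hR
    linarith
  have hsumL : ∑ i, vL i = 1 := by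
    have h1 : Filter.Tendsto (fun n => ∑ i, vv (φ n) i) Filter.atTop
        (nhds (∑ i, vL i)) := tendsto_finset_sum _ fun i _ => htv i
    have h2 : (fun n => ∑ i, vv (φ n) i) = fun _ => (1:ℝ) := by
      funext n; exact hvsum (φ n)
    rw [h2] at h1
    exact (tendsto_nhds_unique tendsto_const_nhds h1).symm
  have hlamL_lb : Real.exp (I / N) ≤ lamL := hmemL.1.1
  -- vL gives a complex eigenvector
  have hvLne : ∃ i, vL i ≠ 0 := by
    by_contra hcon
    push_neg at hcon
    rw [Finset.sum_congr rfl (fun i _ => hcon i)] at hsumL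
    simp at hsumL
  set Pc : Matrix (Fin N) (Fin N) ℂ := (Φ T).map (fun r => (r : ℂ)) with hPc
  have hspec : (lamL : ℂ) ∈ spectrum ℂ Pc := by
    rw [spectrum.mem_iff]
    intro hunit
    rw [Algebra.algebraMap_eq_smul_one, Matrix.isUnit_iff_isUnit_det] at hunit
    have hdet0 : ((lamL : ℂ) • (1 : Matrix (Fin N) (Fin N) ℂ) - Pc).det = 0 := by
      apply Matrix.exists_mulVec_eq_zero_iff.mp
      refine ⟨fun i => (vL i : ℂ), ?_, ?_⟩
      · obtain ⟨i, hi⟩ := hvLne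
        intro h
        apply hi
        simpa using congrFun h i
      · funext i
        rw [Matrix.sub_mulVec, Matrix.smul_mulVec, Matrix.one_mulVec]
        have h2 : Pc.mulVec (fun k => (vL k : ℂ)) i = (((Φ T).mulVec vL i : ℝ) : ℂ) := by
          simp only [hPc, Matrix.mulVec, dotProduct, Matrix.map_apply]
          push_cast
          rfl
        simp only [Pi.sub_apply, Pi.smul_apply, smul_eq_mul, h2, Pi.zero_apply]
        rw [heigL i]
        push_cast
        ring
    rw [hdet0] at hunit
    exact not_isUnit_zero hunit
  have hlamL_le_d : lamL ≤ d := by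
    have := hdom (lamL : ℂ) hspec
    simpa using this
  have hd_pos : 0 < d := lt_of_lt_of_le (lt_of_lt_of_le (Real.exp_pos _) hlamL_lb) hlamL_le_d
  have hexp_le : Real.exp (I / N) ≤ d := le_trans hlamL_lb hlamL_le_d
  have hlog := (Real.le_log_iff_exp_le hd_pos).mpr hexp_le
  rw [ge_iff_le]
  calc (1 / (N:ℝ)) * I = I / N := by ring
    _ ≤ Real.log d := hlog
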